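/- Let H be a complex Hilbert space, let C be a positive invertible bounded linear operator on H, and let (f_i)_{i∈ℕ} be a C-controlled Bessel sequence in H with bound B > 0. Then for every sequence (a_i)_{i∈ℕ} ∈ ℓ²(ℕ, ℂ) the series ∑_i a_i · (C f_i) converges in H, and the resulting synthesis map U : ℓ²(ℕ, ℂ) → H, U((a_i)) = ∑_i a_i · (C f_i), is a bounded linear operator with ‖U‖ ≤ √B · ‖C^{1/2}‖. -/

import Mathlib

open scoped InnerProductSpace
open Complex
open scoped ENNReal

set_option maxHeartbeats 1000000 in
/-- The synthesis operator of a `C`-controlled Bessel sequence is a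
well-defined bounded operator from `ℓ²(ℕ, ℂ)` to `H` with norm at most `√B · ‖C^{1/2}‖`.
Here `R` is the (unique) positive square root of the positive invertible operator `C`,
and the paper's inner product `⟪f, g⟫` (linear in the first argument) is Mathlib's
`⟪g, f⟫_ℂ`. -/
theorem controlled_bessel_synthesis_bounded
    {H : Type*} [NormedAddCommGroup H] [InnerProductSpace ℂ H] [CompleteSpace H]
    (C : H →L[ℂ] H) (hC : C.IsPositive)
    (Cinv : H →L[ℂ] H) (hCr : C ∘L Cinv = 1) (hCl : Cinv ∘L C = 1)
    (R : H →L[ℂ] H) (hR : R.IsPositive) (hRsq : R ∘L R = C)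
    (f : ℕ → H) (B : ℝ) (hB : 0 < B)
    (hBessel : ∀ x : H, ∃ r : ℝ, 0 ≤ r ∧ r ≤ B * ‖x‖ ^ 2 ∧
      HasSum (fun i => ⟪f i, x⟫_ℂ * ⟪x, C (f i)⟫_ℂ) (r : ℂ)) :
    ∃ U : lp (fun _ : ℕ => ℂ) 2 →L[ℂ] H,
      (∀ a : lp (fun _ : ℕ => ℂ) 2, HasSum (fun i => a i • C (f i)) (U a)) ∧
      ‖U‖ ≤ Real.sqrt B * ‖R‖ := by
  -- self-adjointness of C
  have hCsym : ∀ u w : H, ⟪C u, w⟫_ℂ = ⟪u, C w⟫_ℂ := by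
    intro u w
    conv_lhs => rw [← ContinuousLinearMap.isSelfAdjoint_iff'.mp hC.isSelfAdjoint]
    exact ContinuousLinearMap.adjoint_inner_left C w u
  have hCRnorm : ∀ z : H, ‖C z‖ ≤ ‖R‖ ^ 2 * ‖z‖ := by
    intro z
    have h1 : C z = R (R z) := by rw [← hRsq]; rfl
    rw [h1, sq]
    calc ‖R (R z)‖ ≤ ‖R‖ * ‖R z‖ := R.le_opNorm _
      _ ≤ ‖R‖ * (‖R‖ * ‖z‖) :=
        mul_le_mul_of_nonneg_left (R.le_opNorm z) (norm_nonneg R)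
      _ = ‖R‖ * ‖R‖ * ‖z‖ := by ring
  -- key analysis bound
  have hkey : ∀ z : H, ∃ s : ℝ, 0 ≤ s ∧ s ≤ B * ‖R‖ ^ 2 * ‖z‖ ^ 2 ∧
      HasSum (fun i => ‖⟪z, C (f i)⟫_ℂ‖ ^ 2) s := by
    intro z
    by_cases hz : z = 0
    · refine ⟨0, le_refl _, by positivity, ?_⟩
      have : (fun i => ‖⟪z, C (f i)⟫_ℂ‖ ^ 2) = fun _ => (0 : ℝ) := by
        funext i; simp [hz]
      rw [this]; exact hasSum_zero
    · have hzpos : 0 < ‖z‖ := norm_pos_iff.mpr hz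
      have hCz : C z ≠ 0 := by
        intro h
        apply hz
        have : Cinv (C z) = z := by
          have := congrArg (fun T : H →L[ℂ] H => T z) hCl
          simpa using this
        rw [← this, h, map_zero]
      have hCzpos : 0 < ‖C z‖ := norm_pos_iff.mpr hCz
      set t : ℝ := Real.sqrt (‖z‖ / ‖C z‖) with ht
      have htpos : 0 < t := Real.sqrt_pos.mpr (div_pos hzpos hCzpos)
      have ht2 : t ^ 2 = ‖z‖ / ‖C z‖ := Real.sq_sqrt (le_of_lt (div_pos hzpos hCzpos))
      set x : H := ((t : ℂ)) • C z with hx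
      set y : H := (((t⁻¹ : ℝ) : ℂ)) • z with hy
      obtain ⟨r0, hr0, hr0le, hs0⟩ := hBessel (x + y)
      obtain ⟨r1, hr1, hr1le, hs1⟩ := hBessel (x + I • y)
      obtain ⟨r2, hr2, hr2le, hs2⟩ := hBessel (x - y)
      obtain ⟨r3, hr3, hr3le, hs3⟩ := hBessel (x - I • y)
      have htne : (t : ℂ) ≠ 0 := by exact_mod_cast ne_of_gt htpos
      have htt : ((t : ℂ)) * (((t⁻¹ : ℝ) : ℂ)) = 1 := by
        push_cast
        exact mul_inv_cancel₀ htne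
      have hcomb : HasSum (fun i => ((‖⟪z, C (f i)⟫_ℂ‖ ^ 2 : ℝ) : ℂ))
          ((1 / 4 : ℂ) * ((r0 : ℂ) + I * (r1 : ℂ) - (r2 : ℂ) - I * (r3 : ℂ))) := by
        have h := (((hs0.add (hs1.mul_left I)).sub hs2).sub (hs3.mul_left I)).mul_left
          (1 / 4 : ℂ)
        convert h using 2 with i
        · rfl
        have hAW : ⟪f i, C z⟫_ℂ * ⟪z, C (f i)⟫_ℂ = ((‖⟪z, C (f i)⟫_ℂ‖ ^ 2 : ℝ) : ℂ) := by
          rw [← hCsym (f i) z, ← inner_conj_symm z (C (f i))]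
          push_cast
          rw [RCLike.mul_conj, RCLike.norm_conj]
          norm_cast
        simp only [hx, hy, inner_add_left, inner_add_right, inner_sub_left, inner_sub_right,
          inner_smul_left, inner_smul_right, Complex.conj_I, Complex.conj_ofReal, map_mul]
        linear_combination (-(⟪f i, C z⟫_ℂ * ⟪z, C (f i)⟫_ℂ)) * htt - hAW +
          (((t : ℂ)) * ⟪f i, C z⟫_ℂ * (((t⁻¹ : ℝ) : ℂ)) * ⟪z, C (f i)⟫_ℂ / 2 -
           (((t⁻¹ : ℝ) : ℂ)) * ⟪f i, z⟫_ℂ * ((t : ℂ)) * ⟪C z, C (f i)⟫_ℂ / 2) * Complex.I_sq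
      -- real part
      have hre : HasSum (fun i => ‖⟪z, C (f i)⟫_ℂ‖ ^ 2) ((r0 - r2) / 4) := by
        have h := hcomb.mapL Complex.reCLM
        convert h using 1
        case e'_5 => funext i; simp only [Complex.reCLM_apply, Complex.ofReal_re]
        simp
        ring
      refine ⟨(r0 - r2) / 4, ?_, ?_, hre⟩
      · exact hasSum_le (fun i => sq_nonneg _) hasSum_zero hre
      · -- (r0 - r2)/4 ≤ B * ‖R‖^2 * ‖z‖^2
        have hxy : ‖x + y‖ ≤ t * ‖C z‖ + t⁻¹ * ‖z‖ := by
          calc ‖x + y‖ ≤ ‖x‖ + ‖y‖ := norm_add_le _ _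
            _ = t * ‖C z‖ + t⁻¹ * ‖z‖ := by
              rw [hx, hy, norm_smul, norm_smul]
              simp [abs_of_pos htpos, abs_of_pos (inv_pos.mpr htpos)]
        have hsq : (t * ‖C z‖ + t⁻¹ * ‖z‖) ^ 2 = 4 * (‖z‖ * ‖C z‖) := by
          have h2 : (t⁻¹) ^ 2 = ‖C z‖ / ‖z‖ := by
            rw [inv_pow, ht2]
            rw [inv_div]
          have e : (t * ‖C z‖ + t⁻¹ * ‖z‖) ^ 2
              = t ^ 2 * ‖C z‖ ^ 2 + 2 * (t * t⁻¹) * (‖C z‖ * ‖z‖) + (t⁻¹) ^ 2 * ‖z‖ ^ 2 := by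
            ring
          rw [e, ht2, h2, mul_inv_cancel₀ (ne_of_gt htpos)]
          field_simp
          ring
        have hr0le' : r0 ≤ B * (4 * (‖z‖ * ‖C z‖)) := by
          calc r0 ≤ B * ‖x + y‖ ^ 2 := hr0le
            _ ≤ B * (t * ‖C z‖ + t⁻¹ * ‖z‖) ^ 2 := by
              apply mul_le_mul_of_nonneg_left _ (le_of_lt hB)
              exact pow_le_pow_left₀ (norm_nonneg _) hxy 2
            _ = B * (4 * (‖z‖ * ‖C z‖)) := by rw [hsq]
        have hCzle : ‖z‖ * ‖C z‖ ≤ ‖R‖ ^ 2 * ‖z‖ ^ 2 := by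
          calc ‖z‖ * ‖C z‖ ≤ ‖z‖ * (‖R‖ ^ 2 * ‖z‖) :=
              mul_le_mul_of_nonneg_left (hCRnorm z) (norm_nonneg z)
            _ = ‖R‖ ^ 2 * ‖z‖ ^ 2 := by ring
        nlinarith [hr2, hB]
  -- finite synthesis bound
  have hfin : ∀ (a : ℕ → ℂ) (F : Finset ℕ),
      ‖∑ i ∈ F, a i • C (f i)‖ ≤ Real.sqrt B * ‖R‖ * Real.sqrt (∑ i ∈ F, ‖a i‖ ^ 2) := by
    intro a F
    set v : H := ∑ i ∈ F, a i • C (f i) with hv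
    rcases eq_or_lt_of_le (norm_nonneg v) with hv0 | hvpos
    · rw [← hv0]
      positivity
    obtain ⟨s, hs0, hsle, hssum⟩ := hkey v
    have hFle : ∑ i ∈ F, ‖⟪v, C (f i)⟫_ℂ‖ ^ 2 ≤ s :=
      sum_le_hasSum F (fun i _ => sq_nonneg _) hssum
    have h1 : ‖v‖ ^ 2 ≤ ∑ i ∈ F, ‖a i‖ * ‖⟪C (f i), v⟫_ℂ‖ := by
      have hinner : (⟪v, v⟫_ℂ) = ∑ i ∈ F, (starRingEnd ℂ) (a i) * ⟪C (f i), v⟫_ℂ := by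
        rw [hv, sum_inner]
        congr 1
        funext i
        rw [inner_smul_left]
      have : (‖v‖ ^ 2 : ℝ) = ‖(⟪v, v⟫_ℂ)‖ := by
        rw [inner_self_eq_norm_sq_to_K]
        push_cast
        simp [_root_.abs_of_nonneg (sq_nonneg ‖v‖)]
      rw [this, hinner]
      calc ‖∑ i ∈ F, (starRingEnd ℂ) (a i) * ⟪C (f i), v⟫_ℂ‖
          ≤ ∑ i ∈ F, ‖(starRingEnd ℂ) (a i) * ⟪C (f i), v⟫_ℂ‖ := norm_sum_le _ _
        _ = ∑ i ∈ F, ‖a i‖ * ‖⟪C (f i), v⟫_ℂ‖ := by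
            congr 1; funext i; rw [norm_mul, RCLike.norm_conj]
    have h2 : ∑ i ∈ F, ‖a i‖ * ‖⟪C (f i), v⟫_ℂ‖
        ≤ Real.sqrt (∑ i ∈ F, ‖a i‖ ^ 2) * Real.sqrt (∑ i ∈ F, ‖⟪C (f i), v⟫_ℂ‖ ^ 2) :=
      Real.sum_mul_le_sqrt_mul_sqrt F _ _
    have h3 : Real.sqrt (∑ i ∈ F, ‖⟪C (f i), v⟫_ℂ‖ ^ 2) ≤ Real.sqrt B * ‖R‖ * ‖v‖ := by
      have he : ∑ i ∈ F, ‖⟪C (f i), v⟫_ℂ‖ ^ 2 = ∑ i ∈ F, ‖⟪v, C (f i)⟫_ℂ‖ ^ 2 := by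
        congr 1; funext i; rw [norm_inner_symm]
      rw [he]
      calc Real.sqrt (∑ i ∈ F, ‖⟪v, C (f i)⟫_ℂ‖ ^ 2) ≤ Real.sqrt (B * ‖R‖ ^ 2 * ‖v‖ ^ 2) :=
          Real.sqrt_le_sqrt (le_trans hFle hsle)
        _ = Real.sqrt B * ‖R‖ * ‖v‖ := by
          rw [show B * ‖R‖ ^ 2 * ‖v‖ ^ 2 = B * (‖R‖ * ‖v‖) ^ 2 by ring,
            Real.sqrt_mul (le_of_lt hB), Real.sqrt_sq (by positivity)]
          ring
    have h4 : ‖v‖ ^ 2 ≤ Real.sqrt (∑ i ∈ F, ‖a i‖ ^ 2) * (Real.sqrt B * ‖R‖ * ‖v‖) := by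
      calc ‖v‖ ^ 2 ≤ ∑ i ∈ F, ‖a i‖ * ‖⟪C (f i), v⟫_ℂ‖ := h1
        _ ≤ Real.sqrt (∑ i ∈ F, ‖a i‖ ^ 2) * Real.sqrt (∑ i ∈ F, ‖⟪C (f i), v⟫_ℂ‖ ^ 2) := h2
        _ ≤ Real.sqrt (∑ i ∈ F, ‖a i‖ ^ 2) * (Real.sqrt B * ‖R‖ * ‖v‖) :=
            mul_le_mul_of_nonneg_left h3 (Real.sqrt_nonneg _)
    nlinarith [hvpos, Real.sqrt_nonneg (∑ i ∈ F, ‖a i‖ ^ 2), Real.sqrt_nonneg B,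
      norm_nonneg R]
  -- summability of ‖a i‖^2 for a in lp 2
  have hp2 : (0 : ℝ) < (2 : ℝ≥0∞).toReal := by norm_num
  have ha2 : ∀ a : lp (fun _ : ℕ => ℂ) 2, Summable (fun i => ‖a i‖ ^ 2) := by
    intro a
    have := (lp.memℓp a).summable hp2
    simpa using this
  -- summability of the synthesis series
  have hsummable : ∀ a : lp (fun _ : ℕ => ℂ) 2, Summable (fun i => a i • C (f i)) := by
    intro a
    rw [summable_iff_vanishing_norm]
    intro ε hε
    set K : ℝ := Real.sqrt B * ‖R‖ + 1 with hK
    have hKpos : 0 < K := by positivity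
    have hδ : (0 : ℝ) < (ε / K) ^ 2 := by positivity
    obtain ⟨F, hF⟩ := summable_iff_vanishing_norm.mp (ha2 a) ((ε / K) ^ 2) hδ
    refine ⟨F, fun t ht => ?_⟩
    have h1 : ∑ i ∈ t, ‖a i‖ ^ 2 < (ε / K) ^ 2 := by
      have := hF t ht
      calc ∑ i ∈ t, ‖a i‖ ^ 2 ≤ ‖∑ i ∈ t, ‖a i‖ ^ 2‖ := le_abs_self _
        _ < (ε / K) ^ 2 := this
    have h2 : Real.sqrt (∑ i ∈ t, ‖a i‖ ^ 2) ≤ ε / K := by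
      rw [show (ε / K) ^ 2 = (ε / K) * (ε / K) by ring] at h1
      calc Real.sqrt (∑ i ∈ t, ‖a i‖ ^ 2) ≤ Real.sqrt ((ε / K) * (ε / K)) :=
          Real.sqrt_le_sqrt (le_of_lt h1)
        _ = ε / K := Real.sqrt_mul_self (by positivity)
    calc ‖∑ i ∈ t, a i • C (f i)‖ ≤ Real.sqrt B * ‖R‖ * Real.sqrt (∑ i ∈ t, ‖a i‖ ^ 2) :=
        hfin a t
      _ ≤ Real.sqrt B * ‖R‖ * (ε / K) := by
          apply mul_le_mul_of_nonneg_left h2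
          positivity
      _ < ε := by
          rw [hK]
          rw [div_eq_mul_inv]
          have hlt : Real.sqrt B * ‖R‖ < K := by rw [hK]; linarith
          calc Real.sqrt B * ‖R‖ * (ε * K⁻¹) ≤ (K - 1) * (ε * K⁻¹) := by
                apply mul_le_mul_of_nonneg_right _ (by positivity)
                rw [hK]; linarith
            _ < ε := by
                rw [hK]
                have : 0 < Real.sqrt B * ‖R‖ + 1 := by positivity
                rw [show (Real.sqrt B * ‖R‖ + 1 - 1) = Real.sqrt B * ‖R‖ by ring]
                calc Real.sqrt B * ‖R‖ * (ε * (Real.sqrt B * ‖R‖ + 1)⁻¹)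
                    < (Real.sqrt B * ‖R‖ + 1) * (ε * (Real.sqrt B * ‖R‖ + 1)⁻¹) := by
                      apply mul_lt_mul_of_pos_right _ (by positivity)
                      linarith
                  _ = ε := by field_simp
    -- done summability
  -- norm bound on the total sum
  have hbound : ∀ a : lp (fun _ : ℕ => ℂ) 2,
      ‖∑' i, a i • C (f i)‖ ≤ Real.sqrt B * ‖R‖ * ‖a‖ := by
    intro a
    have hs := (hsummable a).hasSum
    have htend : Filter.Tendsto (fun F : Finset ℕ => ‖∑ i ∈ F, a i • C (f i)‖)
        Filter.atTop (nhds ‖∑' i, a i • C (f i)‖) := hs.norm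
    refine le_of_tendsto htend (Filter.Eventually.of_forall fun F => ?_)
    have hle : ∑ i ∈ F, ‖a i‖ ^ 2 ≤ ‖a‖ ^ 2 := by
      have := lp.sum_rpow_le_norm_rpow hp2 a F
      simpa using this
    calc ‖∑ i ∈ F, a i • C (f i)‖ ≤ Real.sqrt B * ‖R‖ * Real.sqrt (∑ i ∈ F, ‖a i‖ ^ 2) :=
        hfin a F
      _ ≤ Real.sqrt B * ‖R‖ * ‖a‖ := by
          apply mul_le_mul_of_nonneg_left _ (by positivity)
          calc Real.sqrt (∑ i ∈ F, ‖a i‖ ^ 2) ≤ Real.sqrt (‖a‖ ^ 2) :=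
              Real.sqrt_le_sqrt hle
            _ = ‖a‖ := Real.sqrt_sq (norm_nonneg a)
  -- build the operator
  let L : lp (fun _ : ℕ => ℂ) 2 →ₗ[ℂ] H :=
    { toFun := fun a => ∑' i, a i • C (f i)
      map_add' := by
        intro a b
        dsimp only
        have h1 : ∀ i, (a + b) i • C (f i) = a i • C (f i) + b i • C (f i) := by
          intro i
          rw [lp.coeFn_add, Pi.add_apply, add_smul]
        rw [tsum_congr h1, Summable.tsum_add (hsummable a) (hsummable b)]
      map_smul' := by
        intro c a
        dsimp only
        have h1 : ∀ i, ((c • a) i) • C (f i) = c • (a i • C (f i)) := by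
          intro i
          rw [lp.coeFn_smul, Pi.smul_apply, smul_smul, smul_eq_mul]
        rw [RingHom.id_apply, tsum_congr h1]
        exact ((hsummable a).hasSum.const_smul c).tsum_eq }
  refine ⟨L.mkContinuous (Real.sqrt B * ‖R‖) (fun a => by
      simpa [mul_assoc, L] using hbound a), fun a => ?_, ?_⟩
  · exact (hsummable a).hasSum
  · exact L.mkContinuous_norm_le (by positivity) _
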